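/- Let p be a prime and m a positive integer. The map f : ℤₚ → ℤₚ given by f(x) = xᵐ is injective if and only if gcd(m, 2(p−1)) = 1. -/

import Mathlib

section aux
variable {p : ℕ} [hp : Fact p.Prime]

lemma toZMod_eq_zero_iff_dvd' (x : ℤ_[p]) :
    PadicInt.toZMod x = 0 ↔ (p : ℤ_[p]) ∣ x := by
  rw [← RingHom.mem_ker, PadicInt.ker_toZMod, PadicInt.maximalIdeal_eq_span_p,
    Ideal.mem_span_singleton]

lemma claimB (hp2 : p ≠ 2) {w : ℤ_[p]} (hw : (p : ℤ_[p]) ∣ w - 1)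
    (h : w ^ p = 1) : w = 1 := by
  set z := w - 1 with hzdef
  have hp3 : 3 ≤ p := by
    have := hp.out.two_le; omega
  have hw1 : w = z + 1 := by rw [hzdef]; ring
  obtain ⟨pm, hpm⟩ : ∃ pm, p = pm + 1 := ⟨p - 1, by omega⟩
  have hexp : w ^ p = (∑ k ∈ Finset.range p, z ^ (k + 1) * (p.choose (k + 1) : ℤ_[p])) + 1 := by
    rw [hw1, add_pow, Finset.sum_range_succ']
    simp
  set T : ℤ_[p] := ∑ k ∈ Finset.range p, z ^ k * (p.choose (k + 1) : ℤ_[p]) with hT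
  have hzT : z * T = 0 := by
    have hsum : (∑ k ∈ Finset.range p, z ^ (k + 1) * (p.choose (k + 1) : ℤ_[p])) = z * T := by
      rw [hT, Finset.mul_sum]
      refine Finset.sum_congr rfl fun k _ => ?_
      ring
    have h2 : z * T + 1 = 1 := by rw [← hsum, ← hexp, h]
    simpa using h2
  rcases mul_eq_zero.mp hzT with hz0 | hT0
  · rw [hzdef] at hz0; exact sub_eq_zero.mp hz0
  · exfalso
    have hdvd : (p : ℤ_[p]) ^ 2 ∣ T - p := by
      have hTs : T = (∑ k ∈ Finset.range pm, z ^ (k + 1) * (p.choose (k + 2) : ℤ_[p])) + p := by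
        rw [hT, show Finset.range p = Finset.range (pm + 1) from by rw [hpm],
          Finset.sum_range_succ']
        simp [Nat.choose_one_right]
      rw [hTs, add_sub_cancel_right]
      refine Finset.dvd_sum fun k hk => ?_
      have hk2 : k + 2 ≤ p := by simp only [Finset.mem_range] at hk; omega
      rcases eq_or_lt_of_le hk2 with heq | hlt
      · have hch : (p.choose (k + 2) : ℤ_[p]) = 1 := by
          rw [heq, Nat.choose_self]; norm_num
        rw [hch, mul_one]
        calc (p : ℤ_[p]) ^ 2 ∣ z ^ 2 := pow_dvd_pow_of_dvd hw 2
          _ ∣ z ^ (k + 1) := pow_dvd_pow z (by omega)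
      · have h1 : (p : ℤ_[p]) ∣ z ^ (k + 1) :=
          hw.trans (dvd_pow_self z (Nat.succ_ne_zero k))
        have h2 : (p : ℤ_[p]) ∣ (p.choose (k + 2) : ℤ_[p]) := by
          exact_mod_cast Nat.cast_dvd_cast
            (hp.out.dvd_choose_self (by omega) hlt)
        rw [pow_two]
        exact mul_dvd_mul h1 h2
    have hp0 : (p : ℤ_[p]) ≠ 0 := Nat.cast_ne_zero.mpr hp.out.ne_zero
    rw [hT0, zero_sub, dvd_neg] at hdvd
    obtain ⟨c, hc⟩ := hdvd
    have h1 : (1 : ℤ_[p]) = p * c := by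
      apply mul_left_cancel₀ hp0
      linear_combination hc
    have hnorm : (1 : ℝ) = ‖(p : ℤ_[p]) * c‖ := by rw [← h1, norm_one]
    rw [norm_mul, PadicInt.norm_p] at hnorm
    have hc1 : ‖c‖ ≤ 1 := PadicInt.norm_le_one c
    have hppos : (1 : ℝ) < p := by exact_mod_cast hp.out.one_lt
    have h2 : (p : ℝ) * 1 = (p : ℝ) * ((p : ℝ)⁻¹ * ‖c‖) := by rw [← hnorm]
    rw [← mul_assoc, mul_inv_cancel₀ (by positivity : (p : ℝ) ≠ 0), one_mul, mul_one] at h2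
    linarith

lemma claimA {n : ℕ} (hn : 0 < n) (hpn : ¬ p ∣ n) {w : ℤ_[p]}
    (hw : (p : ℤ_[p]) ∣ w - 1) (h : w ^ n = 1) : w = 1 := by
  have hg := geom_sum_mul w n
  rw [h, sub_self] at hg
  rcases mul_eq_zero.mp hg with hS | hw0
  · exfalso
    have h1 : PadicInt.toZMod w = 1 := by
      have h0 : PadicInt.toZMod (w - 1) = 0 := (toZMod_eq_zero_iff_dvd' _).mpr hw
      rw [map_sub, map_one, sub_eq_zero] at h0
      exact h0
    have h2 : PadicInt.toZMod (∑ i ∈ Finset.range n, w ^ i) = (n : ZMod p) := by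
      rw [map_sum]
      simp [map_pow, h1]
    rw [hS, map_zero] at h2
    exact hpn ((ZMod.natCast_eq_zero_iff n p).mp h2.symm)
  · exact sub_eq_zero.mp hw0

lemma mainLemma : ∀ m : ℕ, 0 < m → ¬ 2 ∣ m → ∀ w : ℤ_[p],
    (p : ℤ_[p]) ∣ w - 1 → w ^ m = 1 → w = 1 := by
  intro m
  induction m using Nat.strong_induction_on with
  | _ m ih =>
    intro hm hmo w hw hpow
    by_cases hpm : p ∣ m
    · have hp2 : p ≠ 2 := by rintro rfl; exact hmo hpm
      obtain ⟨t, rfl⟩ := hpm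
      have ht0 : 0 < t := Nat.pos_of_ne_zero fun h => by simp [h] at hm
      have hwt : (w ^ t) ^ p = 1 := by rw [← pow_mul, mul_comm]; exact hpow
      have hwt1 : (p : ℤ_[p]) ∣ w ^ t - 1 := by
        calc (p : ℤ_[p]) ∣ w - 1 := hw
          _ ∣ w ^ t - 1 := by simpa using sub_dvd_pow_sub_pow w 1 t
      have ht1 : w ^ t = 1 := claimB hp2 hwt1 hwt
      refine ih t ?_ ?_ ?_ w hw ht1
      · have := hp.out.two_le
        calc t < 2 * t := by omega
          _ ≤ p * t := Nat.mul_le_mul_right t this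
      · exact ht0
      · intro h2t; exact hmo (h2t.mul_left p)
    · exact claimA hm hpm hw hpow

end aux

/-- Let `p` be a prime and `m` a positive integer. The map `x ↦ xᵐ` on `ℤₚ` is
injective if and only if `gcd(m, 2(p−1)) = 1`. -/
theorem stmt_19 (p : ℕ) [Fact p.Prime] (m : ℕ) (hm : 0 < m) :
    Function.Injective (fun x : ℤ_[p] => x ^ m) ↔ Nat.gcd m (2 * (p - 1)) = 1 := by
  have hp := (Fact.out : p.Prime)
  constructor
  · -- injective → gcd = 1
    intro hinj
    by_contra hg
    by_cases h2 : 2 ∣ m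
    · -- even exponent: f(-1) = f(1)
      obtain ⟨t, rfl⟩ := h2
      have : ((-1 : ℤ_[p]) ^ (2 * t)) = (1 : ℤ_[p]) ^ (2 * t) := by
        rw [pow_mul, one_pow, neg_one_sq, one_pow]
      have hne : (-1 : ℤ_[p]) ≠ 1 := by
        intro h
        have : (2 : ℤ_[p]) = 0 := by linear_combination -h
        exact two_ne_zero this
      exact hne (hinj this)
    · -- odd exponent: gcd m (p-1) ≠ 1, pick a prime q and a q-th root of unity
      have hco2 : Nat.Coprime 2 m := (Nat.prime_two.coprime_iff_not_dvd).mpr h2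
      have hgcd : Nat.gcd m (p - 1) ≠ 1 := fun h =>
        hg (Nat.Coprime.mul_right hco2.symm h)
      obtain ⟨q, hq, hqd⟩ := Nat.exists_prime_and_dvd hgcd
      have hqm : q ∣ m := hqd.trans (Nat.gcd_dvd_left _ _)
      have hqp1 : q ∣ p - 1 := hqd.trans (Nat.gcd_dvd_right _ _)
      have hp1pos : 0 < p - 1 := by
        rcases Nat.eq_or_lt_of_le hp.two_le with h | h
        · -- p = 2 : then p - 1 = 1, q ∣ 1 contradiction
          exfalso
          rw [← h] at hqp1
          simp at hqp1
          exact hq.ne_one hqp1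
        · omega
      haveI : Fact q.Prime := ⟨hq⟩
      -- element of order q in (ZMod p)ˣ
      obtain ⟨a, ha⟩ := exists_prime_orderOf_dvd_card (G := (ZMod p)ˣ) q
        (by rw [ZMod.card_units]; exact hqp1)
      set α : ZMod p := ((a : (ZMod p)ˣ) : ZMod p) with hα
      have hαq : α ^ q = 1 := by
        rw [hα, ← Units.val_pow_eq_pow_val, ← ha, pow_orderOf_eq_one, Units.val_one]
      have hα1 : α ≠ 1 := by
        intro h
        have : (a : (ZMod p)ˣ) = 1 := Units.ext h
        rw [this] at ha
        simp at ha
        exact hq.ne_one ha.symm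
      have hα0 : α ≠ 0 := Units.ne_zero a
      -- Hensel lift
      set x₀ : ℤ_[p] := ((α.val : ℕ) : ℤ_[p]) with hx₀
      have hx₀z : PadicInt.toZMod x₀ = α := by
        rw [hx₀, map_natCast]
        simp [ZMod.natCast_val, ZMod.cast_id]
      set F : Polynomial ℤ_[p] := Polynomial.X ^ q - 1 with hF
      have hFeval : ∀ x : ℤ_[p], F.eval x = x ^ q - 1 := by
        intro x; simp [hF]
      have hFd : F.derivative = Polynomial.C (q : ℤ_[p]) * Polynomial.X ^ (q - 1) := by
        rw [hF]
        simp [Polynomial.derivative_X_pow]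
      have hFdeval : F.derivative.eval x₀ = (q : ℤ_[p]) * x₀ ^ (q - 1) := by
        rw [hFd]; simp
      have hq_ne_p : ¬ (p ∣ q) := by
        intro h
        have heq := (Nat.prime_dvd_prime_iff_eq hp hq).mp h
        rw [← heq] at hqp1
        have hle := Nat.le_of_dvd hp1pos hqp1
        omega
      have hd1 : ‖F.derivative.eval x₀‖ = 1 := by
        apply le_antisymm (PadicInt.norm_le_one _)
        by_contra hlt
        push_neg at hlt
        have hdvd := (PadicInt.norm_lt_one_iff_dvd _).mp hlt
        have : PadicInt.toZMod (F.derivative.eval x₀) = 0 :=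
          (toZMod_eq_zero_iff_dvd' _).mpr hdvd
        rw [hFdeval, map_mul, map_natCast, map_pow, hx₀z] at this
        rcases mul_eq_zero.mp this with h | h
        · exact hq_ne_p ((ZMod.natCast_eq_zero_iff q p).mp h)
        · exact hα0 (pow_eq_zero_iff'.mp h).1
      have hnorm : ‖F.eval x₀‖ < ‖F.derivative.eval x₀‖ ^ 2 := by
        rw [hd1, one_pow, hFeval]
        apply (PadicInt.norm_lt_one_iff_dvd _).mpr
        apply (toZMod_eq_zero_iff_dvd' _).mp
        rw [map_sub, map_pow, map_one, hx₀z, hαq, sub_self]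
      obtain ⟨ζ, hζ1, hζ2, -, -⟩ := hensels_lemma hnorm
      rw [Polynomial.coe_aeval_eq_eval, hFeval, sub_eq_zero] at hζ1
      rw [Polynomial.coe_aeval_eq_eval, hd1] at hζ2
      have hζα : PadicInt.toZMod ζ = α := by
        have : (p : ℤ_[p]) ∣ ζ - x₀ := (PadicInt.norm_lt_one_iff_dvd _).mp hζ2
        have h0 : PadicInt.toZMod (ζ - x₀) = 0 := (toZMod_eq_zero_iff_dvd' _).mpr this
        rw [map_sub, sub_eq_zero, hx₀z] at h0
        exact h0
      have hζne : ζ ≠ 1 := by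
        intro h
        rw [h, map_one] at hζα
        exact hα1 hζα.symm
      obtain ⟨s, rfl⟩ := hqm
      have : (fun x : ℤ_[p] => x ^ (q * s)) ζ = (fun x : ℤ_[p] => x ^ (q * s)) 1 := by
        simp only [pow_mul, hζ1, one_pow]
      exact hζne (hinj this)
  · -- gcd = 1 → injective
    intro hgcd x y hxy
    simp only at hxy
    by_cases hy : y = 0
    · subst hy
      rw [zero_pow hm.ne'] at hxy
      exact pow_eq_zero_iff hm.ne' |>.mp hxy
    · have hx : x ≠ 0 := by
        intro h
        apply hy
        rw [h, zero_pow hm.ne'] at hxy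
        exact (pow_eq_zero_iff hm.ne').mp hxy.symm
      -- pass to ℚ_[p]
      have hxyQ : ((x : ℚ_[p])) ^ m = ((y : ℚ_[p])) ^ m := by
        have := congrArg (PadicInt.Coe.ringHom (p := p)) hxy
        simp only [map_pow] at this; exact this
      have hyQ : (y : ℚ_[p]) ≠ 0 := PadicInt.coe_ne_zero.mpr hy
      have hnxy : ‖(x : ℚ_[p])‖ = ‖(y : ℚ_[p])‖ := by
        have h1 : ‖(x : ℚ_[p])‖ ^ m = ‖(y : ℚ_[p])‖ ^ m := by
          rw [← norm_pow, ← norm_pow, hxyQ]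
        rcases lt_trichotomy ‖(x : ℚ_[p])‖ ‖(y : ℚ_[p])‖ with h | h | h
        · exfalso
          have := pow_lt_pow_left₀ h (norm_nonneg _) hm.ne'
          linarith
        · exact h
        · exfalso
          have := pow_lt_pow_left₀ h (norm_nonneg _) hm.ne'
          linarith
      set c : ℚ_[p] := (x : ℚ_[p]) * ((y : ℚ_[p]))⁻¹ with hc
      have hcn : ‖c‖ = 1 := by
        rw [hc, norm_mul, norm_inv, hnxy, mul_inv_cancel₀ (norm_ne_zero_iff.mpr hyQ)]
      set w : ℤ_[p] := ⟨c, le_of_eq hcn⟩ with hw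
      have hwm : w ^ m = 1 := by
        apply Subtype.ext
        show (c : ℚ_[p]) ^ m = 1
        rw [hc, mul_pow, hxyQ, inv_pow, mul_inv_cancel₀ (pow_ne_zero m hyQ)]
      -- reduce mod p
      have hb : PadicInt.toZMod w = 1 := by
        set b := PadicInt.toZMod w with hbdef
        have hbm : b ^ m = 1 := by rw [hbdef, ← map_pow, hwm, map_one]
        have hb0 : b ≠ 0 := by
          intro h
          rw [h, zero_pow hm.ne'] at hbm
          exact zero_ne_one hbm
        have ho1 : orderOf b ∣ m := orderOf_dvd_of_pow_eq_one hbm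
        have ho2 : orderOf b ∣ p - 1 :=
          orderOf_dvd_of_pow_eq_one (ZMod.pow_card_sub_one_eq_one hb0)
        have : orderOf b ∣ Nat.gcd m (2 * (p - 1)) :=
          Nat.dvd_gcd ho1 (ho2.trans (dvd_mul_left (p - 1) 2))
        rw [hgcd, Nat.dvd_one] at this
        exact orderOf_eq_one_iff.mp this
      have hpw : (p : ℤ_[p]) ∣ w - 1 := by
        apply (toZMod_eq_zero_iff_dvd' _).mp
        rw [map_sub, map_one, hb, sub_self]
      have hm2 : ¬ 2 ∣ m := by
        intro h
        have : (2 : ℕ) ∣ Nat.gcd m (2 * (p - 1)) := Nat.dvd_gcd h (dvd_mul_right 2 (p - 1))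
        rw [hgcd] at this
        omega
      have hw1 : w = 1 := mainLemma m hm hm2 w hpw hwm
      -- conclude x = y
      have hc1 : c = 1 := congrArg Subtype.val hw1
      have : (x : ℚ_[p]) = (y : ℚ_[p]) := by
        rw [hc] at hc1
        field_simp at hc1
        exact hc1
      exact Subtype.ext this
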